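/- Let A ⊆ ℝ be an invex set with respect to η satisfying Condition C, and let f be preinvex with respect to η on A. Then for all a, b ∈ A and t ∈ [0,1], 2 f((2a + η(b,a))/2) ≤ f(a + (1−t)·η(b,a)) + f(a + t·η(b,a)). -/

import Mathlib

open MeasureTheory intervalIntegral

/-- Riemann-Liouville left fractional integral `J_{a+}^α f(x)`. -/
noncomputable def JL (α a x : ℝ) (f : ℝ → ℝ) : ℝ :=
  (1 / Real.Gamma α) * ∫ t in a..x, (x - t) ^ (α - 1) * f t

/-- Riemann-Liouville right fractional integral `J_{b-}^α f(x)`. -/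
noncomputable def JR (α x b : ℝ) (f : ℝ → ℝ) : ℝ :=
  (1 / Real.Gamma α) * ∫ t in x..b, (t - x) ^ (α - 1) * f t

/-- `A` is invex with respect to `η`. -/
def InvexSet (A : Set ℝ) (η : ℝ → ℝ → ℝ) : Prop :=
  ∀ x ∈ A, ∀ y ∈ A, ∀ t ∈ Set.Icc (0:ℝ) 1, x + t * η y x ∈ A

/-- `f` is preinvex with respect to `η` on `A`. -/
def PreinvexOn (A : Set ℝ) (η : ℝ → ℝ → ℝ) (f : ℝ → ℝ) : Prop :=
  ∀ x ∈ A, ∀ y ∈ A, ∀ t ∈ Set.Icc (0:ℝ) 1,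
    f (x + t * η y x) ≤ (1 - t) * f x + t * f y

/-- Condition C of Mohan and Neogy. -/
def CondC (A : Set ℝ) (η : ℝ → ℝ → ℝ) : Prop :=
  ∀ x ∈ A, ∀ y ∈ A, ∀ t ∈ Set.Icc (0:ℝ) 1,
    η y (y + t * η x y) = -t * η x y ∧ η x (y + t * η x y) = (1 - t) * η x y

lemma preinvex_midpoint_bound_half
    (A : Set ℝ) (η : ℝ → ℝ → ℝ) (f : ℝ → ℝ)
    (hinv : InvexSet A η) (hC : CondC A η) (hpre : PreinvexOn A η f) :
    ∀ a ∈ A, ∀ b ∈ A, ∀ t, 0 ≤ t → t ≤ 1/2 →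
      2 * f ((2 * a + η b a) / 2) ≤
        f (a + (1 - t) * η b a) + f (a + t * η b a) := by
  intro a ha b hb t ht0 ht2
  have ht1 : t ≤ 1 := by linarith
  have htI : t ∈ Set.Icc (0:ℝ) 1 := ⟨ht0, ht1⟩
  have ht1I : (1 - t) ∈ Set.Icc (0:ℝ) 1 := ⟨by linarith, by linarith⟩
  set η₀ := η b a with hη₀
  have hz₁ : a + t * η₀ ∈ A := hinv a ha b hb t htI
  have hz₂ : a + (1 - t) * η₀ ∈ A := hinv a ha b hb (1 - t) ht1I
  -- η b (a + t*η₀) = (1 - t) * η₀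
  have hC1 := (hC b hb a ha t htI).2
  -- s = (1-2t)/(1-t)
  have h1t : (0:ℝ) < 1 - t := by linarith
  set s := (1 - 2*t) / (1 - t) with hs
  have hsI : s ∈ Set.Icc (0:ℝ) 1 := by
    constructor
    · apply div_nonneg <;> linarith
    · rw [div_le_one h1t]; linarith
  have hC2 := (hC b hb (a + t * η₀) hz₁ s hsI).1
  rw [hC1] at hC2
  have hse : s * ((1 - t) * η₀) = (1 - 2*t) * η₀ := by
    rw [hs, ← mul_assoc, div_mul_cancel₀ _ h1t.ne']
  rw [hse] at hC2
  have heq : a + t * η₀ + (1 - 2*t) * η₀ = a + (1 - t) * η₀ := by ring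
  rw [heq] at hC2
  -- hC2 : η (a + t*η₀) (a + (1-t)*η₀) = -s * ((1-t)*η₀)
  have hC2' : η (a + t * η₀) (a + (1 - t) * η₀) = (2*t - 1) * η₀ := by
    rw [hC2, hs]; field_simp; ring
  have hhalf : (1:ℝ)/2 ∈ Set.Icc (0:ℝ) 1 := by norm_num
  have hmain := hpre (a + (1 - t) * η₀) hz₂ (a + t * η₀) hz₁ (1/2) hhalf
  rw [hC2'] at hmain
  have hmid : a + (1 - t) * η₀ + 1/2 * ((2*t - 1) * η₀) = (2 * a + η₀) / 2 := by ring
  rw [hmid] at hmain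
  linarith

theorem preinvex_midpoint_bound
    (A : Set ℝ) (η : ℝ → ℝ → ℝ) (f : ℝ → ℝ)
    (hinv : InvexSet A η) (hC : CondC A η) (hpre : PreinvexOn A η f) :
    ∀ a ∈ A, ∀ b ∈ A, ∀ t ∈ Set.Icc (0:ℝ) 1,
      2 * f ((2 * a + η b a) / 2) ≤
        f (a + (1 - t) * η b a) + f (a + t * η b a) := by
  intro a ha b hb t ⟨ht0, ht1⟩
  rcases le_or_gt t (1/2) with h | h
  · exact preinvex_midpoint_bound_half A η f hinv hC hpre a ha b hb t ht0 h
  · have := preinvex_midpoint_bound_half A η f hinv hC hpre a ha b hb (1 - t)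
      (by linarith) (by linarith)
    have he : 1 - (1 - t) = t := by ring
    rw [he] at this
    linarith
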